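/- Let r ≥ 1, let β ∈ ℂ be such that neither β nor β−1 is a nonpositive integer, let c_0,…,c_{r−1} be complex numbers with 0 < |c_i| < 1 for all i, let n = (n_0,…,n_{r−1}) ∈ ℕ^r, and fix ℓ ∈ {0,…,r−1}. Suppose P ∈ ℂ[X] satisfies the Meixner orthogonality conditions for (β, n): Σ_{k=0}^∞ P(k)·q(k)·Γ(k+β)·c_i^k/k! = 0 for every i ∈ {0,…,r−1} and every polynomial q with deg q ≤ n_i−1. Define Q(x) := (c_ℓ/(c_ℓ−1))·((x+β−1)·P(x) − (x/c_ℓ)·P(x−1)). Then Q satisfies the Meixner orthogonality conditions for (β−1, n+e_ℓ), namely Σ_{k=0}^∞ Q(k)·q(k)·Γ(k+β−1)·c_i^k/k! = 0 for every i and every polynomial q with deg q ≤ n_i−1 when i ≠ ℓ, and with deg q ≤ n_ℓ when i = ℓ. Moreover, if P is monic of degree N, then Q is monic of degree N+1. -/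

import Mathlib

open Polynomial Finset

/-- The Meixner raising operator on polynomials:
`(Ψ^β_c P)(x) = (c/(c-1))·((x+β-1)·P(x) - (x/c)·P(x-1))`. -/
noncomputable def raiseMeixner (c β : ℂ) (P : Polynomial ℂ) : Polynomial ℂ :=
  Polynomial.C (c / (c - 1)) *
    ((X + Polynomial.C (β - 1)) * P - Polynomial.C c⁻¹ * (X * P.comp (X - Polynomial.C 1)))

/-- `Γ(k+β) = (β)(β+1)⋯(β+k-1)·Γ(β)`. -/
lemma gamma_nat_add (β : ℂ) (hβ : ∀ m : ℕ, β ≠ -(m : ℂ)) (k : ℕ) :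
    Complex.Gamma ((k : ℂ) + β) = (∏ j ∈ Finset.range k, (β + (j : ℂ))) * Complex.Gamma β := by
  induction k with
  | zero => simp
  | succ k ih =>
    have hne : β + (k : ℂ) ≠ 0 := by
      intro h
      exact hβ k (by linear_combination h)
    have h1 : ((k + 1 : ℕ) : ℂ) + β = (β + (k : ℂ)) + 1 := by push_cast; ring
    have h2 : (k : ℂ) + β = β + (k : ℂ) := by ring
    rw [h1, Complex.Gamma_add_one _ hne, Finset.prod_range_succ]
    rw [h2] at ih
    rw [ih]; ring

lemma fact_add_eq (a t : ℕ) :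
    (a + t).factorial = a.factorial * ∏ i ∈ Finset.range t, (a + 1 + i) := by
  induction t with
  | zero => simp
  | succ t ih =>
    have : a + (t + 1) = (a + t) + 1 := by omega
    rw [this, Nat.factorial_succ, ih, Finset.prod_range_succ]
    ring

lemma prod_range_add_le (M k : ℕ) (hM : 1 ≤ M) :
    ∏ i ∈ Finset.range k, (M + i) ≤ k.factorial * (k + M) ^ M := by
  have h1 : ∏ i ∈ Finset.range k, (M + i) ≤ (M - 1 + k).factorial := by
    calc ∏ i ∈ Finset.range k, (M + i)
        ≤ (M - 1).factorial * ∏ i ∈ Finset.range k, (M - 1 + 1 + i) := by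
          have : ∀ i, M - 1 + 1 + i = M + i := fun i => by omega
          simp only [this]
          exact Nat.le_mul_of_pos_left _ (Nat.factorial_pos _)
      _ = (M - 1 + k).factorial := (fact_add_eq _ _).symm
  have h2 : (M - 1 + k).factorial ≤ k.factorial * (k + M) ^ M := by
    have e : M - 1 + k = k + (M - 1) := by omega
    rw [e, fact_add_eq]
    have h3 : ∏ i ∈ Finset.range (M - 1), (k + 1 + i) ≤ (k + M) ^ (M - 1) := by
      have := Finset.prod_le_pow_card (Finset.range (M - 1)) (fun i => k + 1 + i) (k + M)
        (fun x hx => by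
          simp only [Finset.mem_range] at hx
          exact show k + 1 + x ≤ k + M by omega)
      simpa using this
    calc k.factorial * ∏ i ∈ Finset.range (M - 1), (k + 1 + i)
        ≤ k.factorial * (k + M) ^ (M - 1) := Nat.mul_le_mul_left _ h3
      _ ≤ k.factorial * (k + M) ^ M :=
          Nat.mul_le_mul_left _ (Nat.pow_le_pow_right (by omega) (by omega))
  exact h1.trans h2

lemma gamma_eval_bound (β : ℂ) (hβ : ∀ m : ℕ, β ≠ -(m : ℂ)) (M : ℕ) (hM1 : 1 ≤ M)
    (hMβ : ‖β‖ ≤ (M : ℝ)) (k : ℕ) :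
    ‖Complex.Gamma ((k : ℂ) + β)‖ ≤
      (k.factorial : ℝ) * (((M : ℝ) + 1) * ((k : ℝ) + 1)) ^ M * ‖Complex.Gamma β‖ := by
  rw [gamma_nat_add β hβ k, norm_mul]
  have hstep1 : ‖∏ j ∈ Finset.range k, (β + (j : ℂ))‖ ≤ ∏ j ∈ Finset.range k, ((M : ℝ) + j) := by
    refine le_trans (norm_prod_le _ _) ?_
    apply Finset.prod_le_prod (fun i _ => norm_nonneg _)
    intro j _
    calc ‖β + (j : ℂ)‖ ≤ ‖β‖ + ‖(j : ℂ)‖ := norm_add_le _ _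
      _ = ‖β‖ + (j : ℝ) := by
          simp
      _ ≤ (M : ℝ) + (j : ℝ) := by linarith
  have hstep2 : ∏ j ∈ Finset.range k, ((M : ℝ) + j) ≤
      (k.factorial : ℝ) * (((M : ℝ) + 1) * ((k : ℝ) + 1)) ^ M := by
    have hnat := prod_range_add_le M k hM1
    have hcast : ∏ j ∈ Finset.range k, ((M : ℝ) + j) =
        ((∏ i ∈ Finset.range k, (M + i) : ℕ) : ℝ) := by
      push_cast; rfl
    rw [hcast]
    calc ((∏ i ∈ Finset.range k, (M + i) : ℕ) : ℝ)
        ≤ ((k.factorial * (k + M) ^ M : ℕ) : ℝ) := by exact_mod_cast hnat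
      _ = (k.factorial : ℝ) * ((k : ℝ) + M) ^ M := by push_cast; ring
      _ ≤ (k.factorial : ℝ) * (((M : ℝ) + 1) * ((k : ℝ) + 1)) ^ M := by
          have hbase : (k : ℝ) + M ≤ ((M : ℝ) + 1) * ((k : ℝ) + 1) := by
            nlinarith [Nat.cast_nonneg (α := ℝ) k, Nat.cast_nonneg (α := ℝ) M]
          have hpow := pow_le_pow_left₀ (by positivity) hbase M
          exact mul_le_mul_of_nonneg_left hpow (by positivity)
  calc ‖∏ j ∈ Finset.range k, (β + (j : ℂ))‖ * ‖Complex.Gamma β‖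
      ≤ (∏ j ∈ Finset.range k, ((M : ℝ) + j)) * ‖Complex.Gamma β‖ := by
        gcongr
      _ ≤ (k.factorial : ℝ) * (((M : ℝ) + 1) * ((k : ℝ) + 1)) ^ M * ‖Complex.Gamma β‖ := by
        gcongr

lemma poly_eval_bound (R : Polynomial ℂ) (k : ℕ) :
    ‖R.eval (k : ℂ)‖ ≤
      (∑ i ∈ Finset.range (R.natDegree + 1), ‖R.coeff i‖) * ((k : ℝ) + 1) ^ R.natDegree := by
  rw [Polynomial.eval_eq_sum_range]
  refine le_trans (norm_sum_le _ _) ?_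
  rw [Finset.sum_mul]
  apply Finset.sum_le_sum
  intro i hi
  rw [norm_mul, norm_pow, Complex.norm_natCast]
  apply mul_le_mul_of_nonneg_left ?_ (norm_nonneg _)
  calc (k : ℝ) ^ i ≤ ((k : ℝ) + 1) ^ i :=
        pow_le_pow_left₀ (Nat.cast_nonneg k) (by linarith) i
    _ ≤ ((k : ℝ) + 1) ^ R.natDegree :=
        pow_le_pow_right₀ (by linarith [Nat.cast_nonneg (α := ℝ) k])
          (Nat.lt_succ_iff.mp (Finset.mem_range.mp hi))

set_option maxHeartbeats 1000000 in
/-- Master summability lemma for Meixner-type series. -/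
lemma summable_meixner (β cc : ℂ) (hβ : ∀ m : ℕ, β ≠ -(m : ℂ)) (hc0 : cc ≠ 0)
    (hc1 : ‖cc‖ < 1) (R : Polynomial ℂ) :
    Summable (fun k : ℕ => R.eval (k : ℂ) *
      (Complex.Gamma ((k : ℂ) + β) * cc ^ k / (k.factorial : ℂ))) := by
  set M : ℕ := ⌈‖β‖⌉₊ + 1 with hMdef
  set d : ℕ := R.natDegree with hddef
  set A : ℝ := ∑ i ∈ Finset.range (d + 1), ‖R.coeff i‖ with hAdef
  set x : ℝ := ‖cc‖ with hxdef
  have hx0 : x ≠ 0 := norm_ne_zero_iff.mpr hc0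
  have hxnn : 0 ≤ x := norm_nonneg _
  have hxlt : x < 1 := by rw [hxdef]; exact hc1
  have hM1 : 1 ≤ M := by omega
  have hMβ : ‖β‖ ≤ (M : ℝ) := by
    have := Nat.le_ceil (‖β‖)
    have h2 : ((⌈‖β‖⌉₊ : ℝ)) ≤ (M : ℝ) := by
      rw [hMdef]; push_cast; linarith
    linarith
  -- summable majorant
  have h1 : Summable (fun k : ℕ => (k : ℝ) ^ (d + M) * x ^ k) :=
    summable_pow_mul_geometric_of_norm_lt_one _ (by
      rwa [Real.norm_eq_abs, abs_of_nonneg hxnn])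
  have h2 : Summable (fun k : ℕ => (((k + 1 : ℕ) : ℝ)) ^ (d + M) * x ^ (k + 1)) :=
    (summable_nat_add_iff 1).2 h1
  have h3 : Summable (fun k : ℕ => ((k : ℝ) + 1) ^ (d + M) * x ^ k) := by
    apply (h2.mul_left x⁻¹).congr
    intro k
    push_cast
    rw [pow_succ]
    field_simp
  apply Summable.of_norm_bounded
    (g := fun k : ℕ => (A * (((M : ℝ) + 1) ^ M * ‖Complex.Gamma β‖)) *
      (((k : ℝ) + 1) ^ (d + M) * x ^ k)) (h3.mul_left _)
  intro k
  have hfact : ((k.factorial : ℝ)) ≠ 0 := Nat.cast_ne_zero.mpr k.factorial_ne_zero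
  have hfactpos : (0 : ℝ) < (k.factorial : ℝ) := by positivity
  have hnorm : ‖R.eval (k : ℂ) * (Complex.Gamma ((k : ℂ) + β) * cc ^ k / (k.factorial : ℂ))‖
      = ‖R.eval (k : ℂ)‖ * (‖Complex.Gamma ((k : ℂ) + β)‖ * x ^ k / (k.factorial : ℝ)) := by
    rw [norm_mul, norm_div, norm_mul, norm_pow, Complex.norm_natCast]
  rw [hnorm]
  calc ‖R.eval (k : ℂ)‖ * (‖Complex.Gamma ((k : ℂ) + β)‖ * x ^ k / (k.factorial : ℝ))
      ≤ (A * ((k : ℝ) + 1) ^ d) *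
        (((k.factorial : ℝ) * (((M : ℝ) + 1) * ((k : ℝ) + 1)) ^ M * ‖Complex.Gamma β‖)
          * x ^ k / (k.factorial : ℝ)) := by
        have hA : 0 ≤ A := Finset.sum_nonneg (fun i _ => norm_nonneg _)
        have h1 : ‖Complex.Gamma ((k : ℂ) + β)‖ * x ^ k / (k.factorial : ℝ)
            ≤ ((k.factorial : ℝ) * (((M : ℝ) + 1) * ((k : ℝ) + 1)) ^ M * ‖Complex.Gamma β‖)
              * x ^ k / (k.factorial : ℝ) :=
          (div_le_div_iff_of_pos_right hfactpos).mpr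
            (mul_le_mul_of_nonneg_right (gamma_eval_bound β hβ M hM1 hMβ k)
              (pow_nonneg hxnn k))
        exact mul_le_mul (poly_eval_bound R k) h1 (by positivity)
          (mul_nonneg hA (by positivity))
    _ = (A * (((M : ℝ) + 1) ^ M * ‖Complex.Gamma β‖)) * (((k : ℝ) + 1) ^ (d + M) * x ^ k) := by
        rw [mul_pow, pow_add]
        field_simp
        ring

/-- The key summation identity for the raising operator. -/
lemma raise_sum (β : ℂ) (hβ : ∀ m : ℕ, β ≠ -(m : ℂ)) (hβ1 : ∀ m : ℕ, β - 1 ≠ -(m : ℂ))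
    (cc ci : ℂ) (hcc : cc ≠ 0) (hci : ci ≠ 0) (hci1 : ‖ci‖ < 1)
    (P q : Polynomial ℂ) :
    ∑' k : ℕ, (raiseMeixner cc β P).eval (k : ℂ) * q.eval (k : ℂ) *
        (Complex.Gamma ((k : ℂ) + β - 1) * ci ^ k / (k.factorial : ℂ))
      = (cc / (cc - 1)) * ∑' k : ℕ, P.eval (k : ℂ) *
          (q - Polynomial.C (ci / cc) * q.comp (X + Polynomial.C 1)).eval (k : ℂ) *
          (Complex.Gamma ((k : ℂ) + β) * ci ^ k / (k.factorial : ℂ)) := by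
  set F : ℕ → ℂ := fun k => P.eval (k : ℂ) * q.eval (k : ℂ) *
      (Complex.Gamma ((k : ℂ) + β) * ci ^ k / (k.factorial : ℂ)) with hFdef
  set G : ℕ → ℂ := fun k => P.eval (k : ℂ) * (q.comp (X + Polynomial.C 1)).eval (k : ℂ) *
      (Complex.Gamma ((k : ℂ) + β) * ci ^ k / (k.factorial : ℂ)) with hGdef
  set B : ℕ → ℂ := fun k => (k : ℂ) * P.eval ((k : ℂ) - 1) * q.eval (k : ℂ) *
      (Complex.Gamma ((k : ℂ) + β - 1) * ci ^ k / (k.factorial : ℂ)) with hBdef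
  have hFs : Summable F := by
    apply (summable_meixner β ci hβ hci hci1 (P * q)).congr
    intro k
    simp only [hFdef, eval_mul]
  have hGs : Summable G := by
    apply (summable_meixner β ci hβ hci hci1 (P * q.comp (X + Polynomial.C 1))).congr
    intro k
    simp only [hGdef, eval_mul]
  have hBshift : ∀ k : ℕ, B (k + 1) = ci * G k := by
    intro k
    have hk1 : ((k : ℂ) + 1) ≠ 0 := Nat.cast_add_one_ne_zero k
    have hfact : ((k.factorial : ℂ)) ≠ 0 := Nat.cast_ne_zero.mpr k.factorial_ne_zero
    simp only [hBdef, hGdef, eval_comp, eval_add, eval_X, eval_C]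
    push_cast [Nat.factorial_succ]
    have e1 : ((k : ℂ) + 1) - 1 = (k : ℂ) := by ring
    have e2 : ((k : ℂ) + 1) + β - 1 = (k : ℂ) + β := by ring
    rw [e1, e2]
    field_simp
    ring
  have hBs : Summable B := by
    apply (summable_nat_add_iff 1).1
    exact ((hGs.mul_left ci).congr (fun k => (hBshift k).symm))
  have hB0 : B 0 = 0 := by simp [hBdef]
  have htB : ∑' k : ℕ, B k = ci * ∑' k : ℕ, G k := by
    rw [Summable.tsum_eq_zero_add hBs, hB0, zero_add, tsum_congr hBshift, tsum_mul_left]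
  have hpt : ∀ k : ℕ, (raiseMeixner cc β P).eval (k : ℂ) * q.eval (k : ℂ) *
      (Complex.Gamma ((k : ℂ) + β - 1) * ci ^ k / (k.factorial : ℂ))
      = (cc / (cc - 1)) * F k - (cc / (cc - 1) * cc⁻¹) * B k := by
    intro k
    have hne : (k : ℂ) + β - 1 ≠ 0 := by
      intro h
      exact hβ1 k (by linear_combination h)
    have hGam : Complex.Gamma ((k : ℂ) + β) = ((k : ℂ) + β - 1) *
        Complex.Gamma ((k : ℂ) + β - 1) := by
      have h := Complex.Gamma_add_one ((k : ℂ) + β - 1) hne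
      rw [show (k : ℂ) + β - 1 + 1 = (k : ℂ) + β from by ring] at h
      exact h
    simp only [raiseMeixner, hFdef, hBdef, eval_mul, eval_sub, eval_add, eval_X, eval_C,
      eval_comp, eval_one]
    rw [hGam]
    ring
  have hqt : ∀ k : ℕ, P.eval (k : ℂ) *
      (q - Polynomial.C (ci / cc) * q.comp (X + Polynomial.C 1)).eval (k : ℂ) *
      (Complex.Gamma ((k : ℂ) + β) * ci ^ k / (k.factorial : ℂ)) = F k - (ci / cc) * G k := by
    intro k
    simp only [hFdef, hGdef, eval_sub, eval_mul, eval_C]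
    ring
  calc ∑' k : ℕ, (raiseMeixner cc β P).eval (k : ℂ) * q.eval (k : ℂ) *
        (Complex.Gamma ((k : ℂ) + β - 1) * ci ^ k / (k.factorial : ℂ))
      = ∑' k : ℕ, ((cc / (cc - 1)) * F k - (cc / (cc - 1) * cc⁻¹) * B k) := tsum_congr hpt
    _ = (cc / (cc - 1)) * (∑' k, F k) - (cc / (cc - 1) * cc⁻¹) * (∑' k, B k) := by
        rw [Summable.tsum_sub (hFs.mul_left _) (hBs.mul_left _), tsum_mul_left, tsum_mul_left]
    _ = (cc / (cc - 1)) * ((∑' k, F k) - (ci / cc) * (∑' k, G k)) := by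
        rw [htB]
        ring
    _ = (cc / (cc - 1)) * ∑' k : ℕ, (F k - (ci / cc) * G k) := by
        rw [Summable.tsum_sub hFs (hGs.mul_left _), tsum_mul_left]
    _ = (cc / (cc - 1)) * ∑' k : ℕ, P.eval (k : ℂ) *
          (q - Polynomial.C (ci / cc) * q.comp (X + Polynomial.C 1)).eval (k : ℂ) *
          (Complex.Gamma ((k : ℂ) + β) * ci ^ k / (k.factorial : ℂ)) := by
        rw [tsum_congr (fun k => (hqt k).symm)]

/-- If `P` satisfies the Meixner orthogonality conditions for `(β, n)`,
then `Q = Ψ^β_{c_ℓ} P` satisfies them for `(β-1, n+e_ℓ)`; moreover `Q` is monic of degree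
`N+1` whenever `P` is monic of degree `N`. -/
theorem meixner_raising (r : ℕ) (hr : 1 ≤ r) (β : ℂ)
    (hβ : ∀ m : ℕ, β ≠ -(m : ℂ)) (hβ1 : ∀ m : ℕ, β - 1 ≠ -(m : ℂ))
    (c : Fin r → ℂ) (hc0 : ∀ i, c i ≠ 0) (hc1 : ∀ i, ‖c i‖ < 1)
    (n : Fin r → ℕ) (ℓ : Fin r) (P : Polynomial ℂ)
    (horth : ∀ i : Fin r, ∀ q : Polynomial ℂ, q.degree < (n i : WithBot ℕ) →
      ∑' k : ℕ, P.eval (k : ℂ) * q.eval (k : ℂ) *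
        (Complex.Gamma ((k : ℂ) + β) * c i ^ k / (k.factorial : ℂ)) = 0) :
    (∀ i : Fin r, ∀ q : Polynomial ℂ,
      q.degree < ((n i + if i = ℓ then 1 else 0 : ℕ) : WithBot ℕ) →
      ∑' k : ℕ, (raiseMeixner (c ℓ) β P).eval (k : ℂ) * q.eval (k : ℂ) *
        (Complex.Gamma ((k : ℂ) + β - 1) * c i ^ k / (k.factorial : ℂ)) = 0) ∧
    ∀ N : ℕ, P.Monic → P.natDegree = N →
      (raiseMeixner (c ℓ) β P).Monic ∧ (raiseMeixner (c ℓ) β P).natDegree = N + 1 := by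
  constructor
  · intro i q hq
    set qt : Polynomial ℂ := q - Polynomial.C (c i / c ℓ) * q.comp (X + Polynomial.C 1)
      with hqtdef
    have hdeg : qt.degree < (n i : WithBot ℕ) := by
      by_cases hq0 : q = 0
      · have : qt = 0 := by simp [hqtdef, hq0]
        rw [this, degree_zero]
        exact WithBot.bot_lt_coe _
      · have hcomp_lc : (q.comp (X + Polynomial.C 1)).leadingCoeff = q.leadingCoeff := by
          rw [leadingCoeff_comp (by rw [natDegree_X_add_C]; exact one_ne_zero),
            (monic_X_add_C (1 : ℂ)).leadingCoeff, one_pow, mul_one]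
        have hcomp_nd : (q.comp (X + Polynomial.C 1)).natDegree = q.natDegree := by
          rw [natDegree_comp, natDegree_X_add_C, mul_one]
        have hcomp0 : q.comp (X + Polynomial.C 1) ≠ 0 := by
          intro h
          apply hq0
          apply leadingCoeff_eq_zero.mp
          rw [← hcomp_lc, h, leadingCoeff_zero]
        have hdcomp : (q.comp (X + Polynomial.C 1)).degree = q.degree := by
          rw [degree_eq_natDegree hcomp0, degree_eq_natDegree hq0, hcomp_nd]
        by_cases hi : i = ℓ
        · subst hi
          simp only [if_pos rfl] at hq
          have hone : c i / c i = 1 := div_self (hc0 i)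
          have hqt_eq : qt = q - q.comp (X + Polynomial.C 1) := by
            rw [hqtdef, hone, map_one, one_mul]
          have hlt : (q - q.comp (X + Polynomial.C 1)).degree < q.degree :=
            degree_sub_lt hdcomp.symm hq0 hcomp_lc.symm
          have h2 : q.degree ≤ (n i : WithBot ℕ) := by
            rw [degree_eq_natDegree hq0] at hq ⊢
            have hlt' : q.natDegree < n i + 1 := by exact_mod_cast hq
            exact_mod_cast Nat.lt_succ_iff.mp hlt'
          calc qt.degree = (q - q.comp (X + Polynomial.C 1)).degree := by rw [hqt_eq]
            _ < q.degree := hlt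
            _ ≤ (n i : WithBot ℕ) := h2
        · simp only [if_neg hi, add_zero] at hq
          have h1 : qt.degree ≤ q.degree := by
            refine le_trans (degree_sub_le _ _) ?_
            rw [degree_C_mul (div_ne_zero (hc0 i) (hc0 ℓ)), hdcomp]
            exact max_self _ |>.le
          exact lt_of_le_of_lt h1 hq
    rw [raise_sum β hβ hβ1 (c ℓ) (c i) (hc0 ℓ) (hc0 i) (hc1 i) P q,
      horth i qt hdeg, mul_zero]
  · intro N hP hPN
    have hcl : c ℓ ≠ 0 := hc0 ℓ
    have hcl1 : c ℓ ≠ 1 := by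
      intro h
      have := hc1 ℓ
      rw [h] at this
      simp at this
    have hcl1' : c ℓ - 1 ≠ 0 := sub_ne_zero.mpr hcl1
    set p₂ : Polynomial ℂ := P.comp (X - Polynomial.C 1) with hp2def
    have hp2monic : p₂.Monic := hP.comp (monic_X_sub_C 1) (by rw [natDegree_X_sub_C]; exact one_ne_zero)
    have hp2nd : p₂.natDegree = N := by
      rw [hp2def, natDegree_comp, natDegree_X_sub_C, mul_one, hPN]
    have hPcoeffN : P.coeff N = 1 := by
      have := hP.coeff_natDegree
      rwa [hPN] at this
    have hPcoeffN1 : P.coeff (N + 1) = 0 :=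
      coeff_eq_zero_of_natDegree_lt (by rw [hPN]; omega)
    have hp2coeffN : p₂.coeff N = 1 := by
      have := hp2monic.coeff_natDegree
      rwa [hp2nd] at this
    set S : Polynomial ℂ := (X + Polynomial.C (β - 1)) * P -
      Polynomial.C (c ℓ)⁻¹ * (X * p₂) with hSdef
    have hQ : raiseMeixner (c ℓ) β P = Polynomial.C (c ℓ / (c ℓ - 1)) * S := by
      rw [raiseMeixner, hSdef, hp2def]
    have hScoeff : S.coeff (N + 1) = 1 - (c ℓ)⁻¹ := by
      rw [hSdef, coeff_sub, add_mul, coeff_add, coeff_X_mul, coeff_C_mul, coeff_C_mul,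
        coeff_X_mul, hPcoeffN, hPcoeffN1, hp2coeffN]
      ring
    have hQcoeff : (raiseMeixner (c ℓ) β P).coeff (N + 1) = 1 := by
      rw [hQ, coeff_C_mul, hScoeff]
      field_simp
    have hQnd : (raiseMeixner (c ℓ) β P).natDegree ≤ N + 1 := by
      rw [hQ]
      refine le_trans (natDegree_C_mul_le _ _) ?_
      refine le_trans (natDegree_sub_le _ _) ?_
      apply max_le
      · refine le_trans (natDegree_mul_le) ?_
        rw [natDegree_X_add_C, hPN]
        omega
      · refine le_trans (natDegree_C_mul_le _ _) ?_
        refine le_trans (natDegree_mul_le) ?_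
        rw [natDegree_X, hp2nd]
        omega
    have hmonic : (raiseMeixner (c ℓ) β P).Monic :=
      monic_of_natDegree_le_of_coeff_eq_one (N + 1) hQnd hQcoeff
    refine ⟨hmonic, le_antisymm hQnd ?_⟩
    exact le_natDegree_of_ne_zero (by rw [hQcoeff]; exact one_ne_zero)
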